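/- (Noether's inequality) Let N ≥ 3 and let m₀, m₁, …, m_N be integers with m₀ > 1, m₁ ≥ m₂ ≥ … ≥ m_N ≥ 0, satisfying m₀² = 1 + Σ_{i=1}^N m_i² and 3m₀ = 3 + Σ_{i=1}^N m_i. Then m₁ + m₂ + m₃ ≥ m₀ + 1. -/

import Mathlib

/-- Noether's inequality: if `N ≥ 3`, `m₀ > 1`,
`m₁ ≥ m₂ ≥ … ≥ m_N ≥ 0` are integers with `m₀² = 1 + ∑ mᵢ²` and `3m₀ = 3 + ∑ mᵢ`,
then `m₁ + m₂ + m₃ ≥ m₀ + 1`. -/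
theorem stmt13 (N : ℕ) (hN : 3 ≤ N) (m0 : ℤ) (m : Fin N → ℤ)
    (hm0 : 1 < m0) (hanti : Antitone m) (hnn : ∀ i, 0 ≤ m i)
    (h1 : m0 ^ 2 = 1 + ∑ i, (m i) ^ 2) (h2 : 3 * m0 = 3 + ∑ i, m i) :
    m0 + 1 ≤ m ⟨0, by omega⟩ + m ⟨1, by omega⟩ + m ⟨2, by omega⟩ := by
  have h0 : (0 : ℕ) < N := by omega
  have h1' : (1 : ℕ) < N := by omega
  have h2' : (2 : ℕ) < N := by omega
  set a := m ⟨0, h0⟩ with ha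
  set b := m ⟨1, h1'⟩ with hb
  set c := m ⟨2, h2'⟩ with hc
  set T := Finset.univ.filter (fun i : Fin N => 3 ≤ i.val) with hT
  have key : ∀ f : Fin N → ℤ, ∑ i, f i =
      f ⟨0, h0⟩ + f ⟨1, h1'⟩ + f ⟨2, h2'⟩ + ∑ i ∈ T, f i := by
    intro f
    have h := Finset.sum_filter_add_sum_filter_not Finset.univ
      (fun i : Fin N => i.val < 3) f
    have hset : Finset.univ.filter (fun i : Fin N => i.val < 3) =
        ({⟨0, h0⟩, ⟨1, h1'⟩, ⟨2, h2'⟩} : Finset (Fin N)) := by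
      ext i
      simp [Fin.ext_iff]
      omega
    have hnot : Finset.univ.filter (fun i : Fin N => ¬ i.val < 3) = T := by
      rw [hT]
      congr 1
      ext i
      omega
    rw [hset, hnot] at h
    rw [← h, Finset.sum_insert (by simp [Fin.ext_iff]),
      Finset.sum_insert (by simp [Fin.ext_iff]), Finset.sum_singleton]
    ring
  -- bound: squares on the tail are at most c * (values)
  have htail : ∑ i ∈ T, (m i) ^ 2 ≤ c * ∑ i ∈ T, m i := by
    rw [Finset.mul_sum]
    apply Finset.sum_le_sum
    intro i hi
    have hi3 : 3 ≤ i.val := by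
      simpa [hT] using hi
    have hmi : m i ≤ c := by
      apply hanti
      exact (by simp [Fin.le_def]; omega : (⟨2, h2'⟩ : Fin N) ≤ i)
    nlinarith [hnn i]
  have hs1 := key m
  have hs2 := key (fun i => (m i) ^ 2)
  rw [hs1] at h2
  rw [hs2] at h1
  -- a ≤ m0 - 1
  have hasq : a ^ 2 ≤ m0 ^ 2 - 1 := by
    have hb2 : 0 ≤ b ^ 2 := sq_nonneg b
    have hc2 : 0 ≤ c ^ 2 := sq_nonneg c
    have htnn : 0 ≤ ∑ i ∈ T, (m i) ^ 2 :=
      Finset.sum_nonneg fun i _ => sq_nonneg (m i)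
    linarith
  have hale : a ≤ m0 - 1 := by nlinarith [hnn ⟨0, h0⟩]
  have hba : b ≤ a := hanti (by simp [Fin.le_def])
  have hcb : c ≤ b := hanti (by simp [Fin.le_def])
  have hcn : 0 ≤ c := hnn ⟨2, h2'⟩
  nlinarith [mul_nonneg (sub_nonneg.mpr hba) (sub_nonneg.mpr hcb),
    mul_nonneg (by linarith : (0:ℤ) ≤ m0 - 1 - a) (by linarith : (0:ℤ) ≤ a + b - 2*c),
    mul_pos (by linarith : (0:ℤ) < m0 - 1) (by linarith : (0:ℤ) < m0 - 1)]
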